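/- If (\{f_n\}, \{\tau_n\}) is a p-ASF for X with frame operator S_{f,τ}, then both (\{f_n ∘ S_{f,τ}^{-1}\}, \{τ_n\}) and (\{f_n\}, \{S_{f,τ}^{-1} τ_n\}) are p-ASFs for X. -/
import Mathlib


open scoped ENNReal
open Filter Topology

noncomputable section

/-- The sequence space `ℓ^p(ℕ)` over `ℝ`. -/
abbrev lpN (p : ℝ≥0∞) := lp (fun _ : ℕ => ℝ) p

/-- A pair `({f_n}, {τ_n})` is a p-approximate Bessel sequence (p-ABS) for `X`:
the analysis map `x ↦ (f_n x)_n` is a well-defined bounded linear operator into `ℓ^p`,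
and the synthesis map `(a_n) ↦ Σ a_n τ_n` is a well-defined bounded linear operator. -/
def IsPABS (p : ℝ≥0∞) [Fact (1 ≤ p)] {X : Type*} [NormedAddCommGroup X] [NormedSpace ℝ X]
    (f : ℕ → X →L[ℝ] ℝ) (τ : ℕ → X) : Prop :=
  (∃ θf : X →L[ℝ] lpN p, ∀ (x : X) (n : ℕ), (θf x) n = f n x) ∧
  (∃ θτ : lpN p →L[ℝ] X, ∀ a : lpN p, HasSum (fun n => (a n) • τ n) (θτ a))

/-- A pair `({f_n}, {τ_n})` is a p-approximate Schauder frame (p-ASF) for `X`: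
it is a p-ABS whose frame operator `S_{f,τ} = θ_τ ∘ θ_f` is bounded invertible. -/
def IsPASF (p : ℝ≥0∞) [Fact (1 ≤ p)] {X : Type*} [NormedAddCommGroup X] [NormedSpace ℝ X]
    (f : ℕ → X →L[ℝ] ℝ) (τ : ℕ → X) : Prop :=
  ∃ (θf : X →L[ℝ] lpN p) (θτ : lpN p →L[ℝ] X) (S : X ≃L[ℝ] X),
    (∀ (x : X) (n : ℕ), (θf x) n = f n x) ∧
    (∀ a : lpN p, HasSum (fun n => (a n) • τ n) (θτ a)) ∧
    (S : X →L[ℝ] X) = θτ.comp θf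
/-- if `({f_n},{τ_n})` is a p-ASF with frame operator `S`, then both
`({f_n ∘ S⁻¹},{τ_n})` and `({f_n},{S⁻¹ τ_n})` are p-ASFs. -/
theorem pASF_canonical_duals_are_pASF
    {X : Type*} [NormedAddCommGroup X] [NormedSpace ℝ X] [CompleteSpace X]
    (p : ℝ≥0∞) [Fact (1 ≤ p)] (hp : p ≠ ∞)
    (f : ℕ → X →L[ℝ] ℝ) (τ : ℕ → X)
    (θf : X →L[ℝ] lpN p) (θτ : lpN p →L[ℝ] X) (S : X ≃L[ℝ] X)
    (hθf : ∀ (x : X) (n : ℕ), (θf x) n = f n x)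
    (hθτ : ∀ a : lpN p, HasSum (fun n => (a n) • τ n) (θτ a))
    (hS : (S : X →L[ℝ] X) = θτ.comp θf) :
    IsPASF p (fun n => (f n).comp (S.symm : X →L[ℝ] X)) τ ∧
    IsPASF p f (fun n => S.symm (τ n)) := by
  constructor
  · refine ⟨θf.comp (S.symm : X →L[ℝ] X), θτ, ContinuousLinearEquiv.refl ℝ X, ?_, hθτ, ?_⟩
    · intro x n; simp [hθf]
    · ext x
      simp only [ContinuousLinearEquiv.coe_refl, ContinuousLinearMap.coe_id, id_eq,
        ContinuousLinearMap.comp_apply]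
      have h := DFunLike.congr_fun hS (S.symm x)
      simp only [ContinuousLinearMap.comp_apply, ContinuousLinearEquiv.coe_coe] at h
      simp [← h]
  · refine ⟨θf, (S.symm : X →L[ℝ] X).comp θτ, ContinuousLinearEquiv.refl ℝ X, hθf, ?_, ?_⟩
    · intro a
      have := (hθτ a).mapL (S.symm : X →L[ℝ] X)
      simpa using this
    · ext x
      simp only [ContinuousLinearEquiv.coe_refl, ContinuousLinearMap.coe_id, id_eq,
        ContinuousLinearMap.comp_apply]
      have h := DFunLike.congr_fun hS x
      simp only [ContinuousLinearMap.comp_apply, ContinuousLinearEquiv.coe_coe] at h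
      simp [← h]
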